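/- For n ≥ 6, let G_{6+n} be the bipartite graph with parts V1 = Z_6 and V2 = Z_n where i ∈ V2 is adjacent to j ∈ V1 iff j ≡ i, i+1, or i+3 (mod 6). Then G_{6+n} has diameter 3. -/

import Mathlib

/-- The bipartite graph on parts `A` and `B` determined by the relation `R`. -/
def bipGraph {A B : Type*} (R : A → B → Prop) : SimpleGraph (A ⊕ B) where
  Adj x y :=
    match x, y with
    | Sum.inl a, Sum.inr b => R a b
    | Sum.inr b, Sum.inl a => R a b
    | _, _ => False
  symm := by constructor; rintro (a | b) (a' | b') h <;> simp_all
  loopless := by constructor; rintro (a | b) h <;> simp_all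

/-- The graph `G_{6+n}`: parts `V1 = Z_6` and `V2 = {0,…,n−1}`, where `i ∈ V2` is
adjacent to `j ∈ V1` iff `j ≡ i, i+1, i+3 (mod 6)`. -/
def G6n (n : ℕ) : SimpleGraph (ZMod 6 ⊕ Fin n) :=
  bipGraph (fun (j : ZMod 6) (i : Fin n) =>
    j = ((i : ℕ) : ZMod 6) ∨ j = ((i : ℕ) : ZMod 6) + 1 ∨ j = ((i : ℕ) : ZMod 6) + 3)

lemma G6n_adj_lr (n : ℕ) (j : ZMod 6) (i : Fin n) :
    (G6n n).Adj (Sum.inl j) (Sum.inr i) ↔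
      (j = ((i : ℕ) : ZMod 6) ∨ j = ((i : ℕ) : ZMod 6) + 1 ∨ j = ((i : ℕ) : ZMod 6) + 3) :=
  Iff.rfl

lemma G6n_adj_rl (n : ℕ) (j : ZMod 6) (i : Fin n) :
    (G6n n).Adj (Sum.inr i) (Sum.inl j) ↔
      (j = ((i : ℕ) : ZMod 6) ∨ j = ((i : ℕ) : ZMod 6) + 1 ∨ j = ((i : ℕ) : ZMod 6) + 3) :=
  Iff.rfl

lemma G6n_not_adj_ll (n : ℕ) (j j' : ZMod 6) : ¬ (G6n n).Adj (Sum.inl j) (Sum.inl j') :=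
  fun h => h

lemma G6n_not_adj_rr (n : ℕ) (i i' : Fin n) : ¬ (G6n n).Adj (Sum.inr i) (Sum.inr i') :=
  fun h => h

/-- lift a residue to `Fin n` -/
def embZ (n : ℕ) (hn : 6 ≤ n) (r : ZMod 6) : Fin n :=
  ⟨r.val, lt_of_lt_of_le (ZMod.val_lt r) hn⟩

lemma embZ_cast (n : ℕ) (hn : 6 ≤ n) (r : ZMod 6) :
    (((embZ n hn r : Fin n) : ℕ) : ZMod 6) = r := by
  simp [embZ, ZMod.natCast_val, ZMod.cast_id]

lemma common1 : ∀ j j' : ZMod 6, ∃ r : ZMod 6,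
    (j = r ∨ j = r + 1 ∨ j = r + 3) ∧ (j' = r ∨ j' = r + 1 ∨ j' = r + 3) := by decide

lemma common2 : ∀ r r' : ZMod 6, ∃ j : ZMod 6,
    (j = r ∨ j = r + 1 ∨ j = r + 3) ∧ (j = r' ∨ j = r' + 1 ∨ j = r' + 3) := by decide

/-- distance between two `V1` vertices is at most 2 -/
lemma edist_ll (n : ℕ) (hn : 6 ≤ n) (j j' : ZMod 6) :
    (G6n n).edist (Sum.inl j) (Sum.inl j') ≤ 2 := by
  obtain ⟨r, h1, h2⟩ := common1 j j'
  have ha : (G6n n).Adj (Sum.inl j) (Sum.inr (embZ n hn r)) := by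
    rw [G6n_adj_lr, embZ_cast]; exact h1
  have hb : (G6n n).Adj (Sum.inr (embZ n hn r)) (Sum.inl j') := by
    rw [G6n_adj_rl, embZ_cast]; exact h2
  have := (G6n n).edist_le (SimpleGraph.Walk.cons ha (SimpleGraph.Walk.cons hb SimpleGraph.Walk.nil))
  simpa using this

lemma edist_rr (n : ℕ) (i i' : Fin n) :
    (G6n n).edist (Sum.inr i) (Sum.inr i') ≤ 2 := by
  obtain ⟨j, h1, h2⟩ := common2 ((i : ℕ) : ZMod 6) ((i' : ℕ) : ZMod 6)
  have ha : (G6n n).Adj (Sum.inr i) (Sum.inl j) := by rw [G6n_adj_rl]; exact h1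
  have hb : (G6n n).Adj (Sum.inl j) (Sum.inr i') := by rw [G6n_adj_lr]; exact h2
  have := (G6n n).edist_le (SimpleGraph.Walk.cons ha (SimpleGraph.Walk.cons hb SimpleGraph.Walk.nil))
  simpa using this

lemma edist_lr (n : ℕ) (hn : 6 ≤ n) (j : ZMod 6) (i : Fin n) :
    (G6n n).edist (Sum.inl j) (Sum.inr i) ≤ 3 := by
  have ha : (G6n n).Adj (Sum.inl ((i : ℕ) : ZMod 6)) (Sum.inr i) := by
    rw [G6n_adj_lr]; left; rfl
  calc (G6n n).edist (Sum.inl j) (Sum.inr i)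
      ≤ (G6n n).edist (Sum.inl j) (Sum.inl ((i : ℕ) : ZMod 6))
        + (G6n n).edist (Sum.inl ((i : ℕ) : ZMod 6)) (Sum.inr i) := (G6n n).edist_triangle
    _ ≤ 2 + 1 := by
        gcongr
        · exact edist_ll n hn _ _
        · exact le_of_eq (SimpleGraph.edist_eq_one_iff_adj.mpr ha)
    _ = 3 := by norm_num

/-- every walk from a non-adjacent cross pair has length ≥ 3 -/
lemma three_le_length (n : ℕ) (j : ZMod 6) (i : Fin n)
    (hna : ¬ (G6n n).Adj (Sum.inl j) (Sum.inr i))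
    (w : (G6n n).Walk (Sum.inl j) (Sum.inr i)) : 3 ≤ w.length := by
  cases w with
  | cons h1 w1 =>
    rename_i x
    cases x with
    | inl a => exact absurd h1 (G6n_not_adj_ll n _ _)
    | inr b =>
      cases w1 with
      | nil => exact absurd h1 hna
      | cons h2 w2 =>
        rename_i y
        cases y with
        | inr b' => exact absurd h2 (G6n_not_adj_rr n _ _)
        | inl a' =>
          cases w2 with
          | cons h3 w3 =>
            simp [SimpleGraph.Walk.length_cons]

theorem ediam_G6n (n : ℕ) (hn : 6 ≤ n) : (G6n n).ediam = 3 := by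
  have h0 : (0 : ℕ) < n := by omega
  apply le_antisymm
  · rw [SimpleGraph.ediam_le_iff]
    rintro (j | i) (j' | i')
    · exact le_trans (edist_ll n hn j j') (by norm_num)
    · exact edist_lr n hn j i'
    · rw [SimpleGraph.edist_comm]; exact edist_lr n hn j' i
    · exact le_trans (edist_rr n i i') (by norm_num)
  · -- the pair (inl 2, inr 0) is at distance ≥ 3
    set u : ZMod 6 ⊕ Fin n := Sum.inl 2
    set v : ZMod 6 ⊕ Fin n := Sum.inr ⟨0, h0⟩
    have hna : ¬ (G6n n).Adj u v := by
      rw [G6n_adj_lr]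
      simp only [Fin.val_mk, Nat.cast_zero]
      decide
    have hr : (G6n n).Reachable u v := by
      have h := edist_lr n hn 2 ⟨0, h0⟩
      exact (G6n n).reachable_of_edist_ne_top (by intro hc; rw [hc] at h; exact absurd h (by simp))
    obtain ⟨w, hw⟩ := hr.exists_walk_length_eq_edist
    have h3 : 3 ≤ w.length := three_le_length n 2 ⟨0, h0⟩ hna w
    calc (3 : ℕ∞) ≤ (w.length : ℕ∞) := by exact_mod_cast h3
      _ = (G6n n).edist u v := hw
      _ ≤ (G6n n).ediam := SimpleGraph.edist_le_ediam

/-- For `n ≥ 6`, the bipartite graph `G_{6+n}` has diameter `3`. -/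
theorem stmt_15 (n : ℕ) (hn : 6 ≤ n) : (G6n n).diam = 3 := by
  have h := ediam_G6n n hn
  simp [SimpleGraph.diam, h]
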